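/- For any preference profile, committee size k ≤ m, and q ∈ (n/(k+1), n/k], there exists at least one committee of size k satisfying q-PSC. -/

import Mathlib

open Finset

variable {V C : Type*} [Fintype V] [Fintype C] [DecidableEq V] [DecidableEq C] {m : ℕ}

/-- The `j`-prefix of voter `i`: the set of their `j` most preferred candidates
(candidate ranks are given by `rank i`, smaller rank = more preferred). -/
def prefixSet (rank : V → C ≃ Fin m) (i : V) (j : ℕ) : Finset C :=
  Finset.univ.filter fun c => (rank i c : ℕ) < j

/-- The equivalence class of voters whose `j`-prefix equals `C'`. -/
def eqClass (rank : V → C ≃ Fin m) (j : ℕ) (C' : Finset C) : Finset V :=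
  Finset.univ.filter fun i => prefixSet rank i j = C'

/-- `N'` is a solid coalition supporting `C'`: every voter in `N'` prefers every
candidate in `C'` to every candidate outside `C'`. -/
def Solid (rank : V → C ≃ Fin m) (N' : Finset V) (C' : Finset C) : Prop :=
  ∀ i ∈ N', ∀ c' ∈ C', ∀ c ∉ C', (rank i c' : ℕ) < (rank i c : ℕ)

/-- `W` satisfies `q`-PSC. -/
def PSC (rank : V → C ≃ Fin m) (q : ℝ) (W : Finset C) : Prop :=
  ∀ ℓ : ℕ, 0 < ℓ → ∀ N' : Finset V, ∀ C' : Finset C,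
    Solid rank N' C' → (ℓ : ℝ) * q ≤ (N'.card : ℝ) →
    min ℓ C'.card ≤ (W ∩ C').card

/-- One addition step of the Minimal Demand rule at stage `j`: some equivalence
class with `j`-prefix `C'` has an unmet PSC demand, and a candidate of `C' \ W`
is added. -/
def mdStep (rank : V → C ≃ Fin m) (q : ℝ) (j : ℕ) (W W' : Finset C) : Prop :=
  ∃ C' : Finset C,
    ((W ∩ C').card : ℤ) < min ⌊((eqClass rank j C').card : ℝ) / q⌋ (C'.card : ℤ) ∧
    ∃ c ∈ C', c ∉ W ∧ W' = insert c W

/-- A complete run of stage `j` of the Minimal Demand rule: repeat `mdStep`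
until no further step is possible. -/
def mdStage (rank : V → C ≃ Fin m) (q : ℝ) (j : ℕ) (W W' : Finset C) : Prop :=
  Relation.ReflTransGen (mdStep rank q j) W W' ∧ ∀ W'', ¬ mdStep rank q j W' W''

/-- `W` is a possible outcome of the Minimal Demand rule: starting from `∅`,
run stages `j = 1, …, m` to completion (for some choice of added candidates). -/
def MDOutcome (rank : V → C ≃ Fin m) (q : ℝ) (W : Finset C) : Prop :=
  ∃ f : ℕ → Finset C, f 0 = ∅ ∧
    (∀ j < m, mdStage rank q (j + 1) (f j) (f (j + 1))) ∧ W = f m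

/-! ### Auxiliary development -/

section Aux

variable (rank : V → C ≃ Fin m) (q : ℝ)

lemma card_fin_filter_lt (t : ℕ) :
    (Finset.univ.filter fun x : Fin m => (x : ℕ) < t).card = min t m := by
  have h : (Finset.univ.filter fun x : Fin m => (x : ℕ) < t).card
      = ((Finset.range m).filter fun x => x < t).card := by
    refine Finset.card_bij (fun (x : Fin m) _ => (x : ℕ)) ?_ ?_ ?_
    · intro x hx
      simp only [Finset.mem_filter, Finset.mem_univ, true_and] at hx
      simp [Finset.mem_filter, Finset.mem_range, x.isLt, hx]
    · intro x hx y hy hxy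
      exact Fin.val_injective hxy
    · intro y hy
      simp only [Finset.mem_filter, Finset.mem_range] at hy
      exact ⟨⟨y, hy.1⟩, by simp [hy.2], rfl⟩
  rw [h]
  have : (Finset.range m).filter (fun x => x < t) = Finset.range (min t m) := by
    ext x
    simp [Finset.mem_filter, Finset.mem_range, lt_min_iff, and_comm]
  rw [this, Finset.card_range]

lemma prefixSet_card (i : V) (j : ℕ) : (prefixSet rank i j).card = min j m := by
  rw [← card_fin_filter_lt (m := m) j]
  refine Finset.card_bij (fun (c : C) _ => rank i c) ?_ ?_ ?_
  · intro c hc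
    simp only [prefixSet, Finset.mem_filter, Finset.mem_univ, true_and] at hc ⊢
    exact hc
  · intro x hx y hy hxy
    exact (rank i).injective hxy
  · intro y hy
    simp only [Finset.mem_filter, Finset.mem_univ, true_and] at hy
    exact ⟨(rank i).symm y, by simp [prefixSet, hy], by simp⟩

lemma prefixSet_mono (i : V) {j j' : ℕ} (h : j ≤ j') :
    prefixSet rank i j ⊆ prefixSet rank i j' := by
  intro c hc
  simp only [prefixSet, Finset.mem_filter, Finset.mem_univ, true_and] at hc ⊢
  omega

/-- A fractional load certificate witnessing that `W` is not too large: each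
member of `W` is paid a total of `q` by voters, each voter pays at most `1`
in total, and voters only pay candidates in their current `j`-prefix. -/
def Cert (j : ℕ) (W : Finset C) : Prop :=
  ∃ g : V → C → ℝ,
    (∀ i c, 0 ≤ g i c) ∧
    (∀ i c, g i c ≠ 0 → c ∈ W ∧ c ∈ prefixSet rank i j) ∧
    (∀ i, ∑ c, g i c ≤ 1) ∧
    (∀ c ∈ W, ∑ i, g i c = q)

/-- All PSC demands at prefix level `j` are met by `W`. -/
def Sat (j : ℕ) (W : Finset C) : Prop :=
  ∀ C' : Finset C, C'.card = j → ∀ ℓ : ℕ, 0 < ℓ →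
    (ℓ : ℝ) * q ≤ ((eqClass rank j C').card : ℝ) →
    min ℓ C'.card ≤ (W ∩ C').card

lemma sat_mono {j : ℕ} {W W' : Finset C} (hWW' : W ⊆ W') (h : Sat rank q j W) :
    Sat rank q j W' := by
  intro C' hC' ℓ hℓ hle
  exact le_trans (h C' hC' ℓ hℓ hle)
    (Finset.card_le_card (Finset.inter_subset_inter hWW' Finset.Subset.rfl))

lemma cert_mono_j {j j' : ℕ} (h : j ≤ j') {W : Finset C}
    (hc : Cert rank q j W) : Cert rank q j' W := by
  obtain ⟨g, h0, hsupp, hv, hcand⟩ := hc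
  exact ⟨g, h0, fun i c hg => ⟨(hsupp i c hg).1, prefixSet_mono rank i h (hsupp i c hg).2⟩,
    hv, hcand⟩

lemma cert_card (hq : 0 < q) {j : ℕ} {W : Finset C} (hc : Cert rank q j W) :
    (W.card : ℝ) * q ≤ (Fintype.card V : ℝ) := by
  obtain ⟨g, h0, hsupp, hv, hcand⟩ := hc
  have h1 : (W.card : ℝ) * q = ∑ c ∈ W, ∑ i, g i c := by
    rw [Finset.sum_congr rfl hcand, Finset.sum_const, nsmul_eq_mul]
  have h2 : ∑ c ∈ W, ∑ i, g i c = ∑ i, ∑ c ∈ W, g i c := Finset.sum_comm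
  have h3 : ∀ i : V, ∑ c ∈ W, g i c ≤ 1 := by
    intro i
    refine le_trans ?_ (hv i)
    exact Finset.sum_le_sum_of_subset_of_nonneg (Finset.subset_univ W)
      (fun c _ _ => h0 i c)
  calc (W.card : ℝ) * q = ∑ i, ∑ c ∈ W, g i c := by rw [h1, h2]
    _ ≤ ∑ _i : V, (1 : ℝ) := Finset.sum_le_sum (fun i _ => h3 i)
    _ = (Fintype.card V : ℝ) := by simp

lemma cert_insert (hq : 0 < q) {j : ℕ} {W : Finset C} (hcert : Cert rank q j W)
    (C' : Finset C)
    (hN : (((W ∩ C').card : ℝ) + 1) * q ≤ ((eqClass rank j C').card : ℝ))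
    {c : C} (hc : c ∈ C') (hcW : c ∉ W) : Cert rank q j (insert c W) := by
  classical
  obtain ⟨g, h0, hsupp, hv, hcand⟩ := hcert
  set N : Finset V := eqClass rank j C' with hNdef
  have hNpre : ∀ i ∈ N, prefixSet rank i j = C' := by
    intro i hi
    simpa [hNdef, eqClass] using hi
  set used : V → ℝ := fun i => ∑ c', g i c' with husedDef
  have hused0 : ∀ i, 0 ≤ used i := fun i => Finset.sum_nonneg (fun c' _ => h0 i c')
  have hused1 : ∀ i, used i ≤ 1 := hv
  have hgc0 : ∀ i, g i c = 0 := by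
    intro i
    by_contra hne
    exact hcW (hsupp i c hne).1
  -- total payments of coalition N
  have hpay : ∑ i ∈ N, used i ≤ ((W ∩ C').card : ℝ) * q := by
    have e1 : ∑ i ∈ N, used i = ∑ c'' : C, ∑ i ∈ N, g i c'' := by
      rw [husedDef]; exact Finset.sum_comm
    have e2 : ∑ c'' : C, ∑ i ∈ N, g i c'' = ∑ c'' ∈ W ∩ C', ∑ i ∈ N, g i c'' := by
      symm
      apply Finset.sum_subset (Finset.subset_univ _)
      intro c'' _ hc''
      apply Finset.sum_eq_zero
      intro i hi
      by_contra hne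
      obtain ⟨hc''W, hc''p⟩ := hsupp i c'' hne
      rw [hNpre i hi] at hc''p
      exact hc'' (Finset.mem_inter.mpr ⟨hc''W, hc''p⟩)
    have e3 : ∀ c'' ∈ W ∩ C', ∑ i ∈ N, g i c'' ≤ q := by
      intro c'' hc''
      rw [← hcand c'' (Finset.mem_inter.mp hc'').1]
      exact Finset.sum_le_sum_of_subset_of_nonneg (Finset.subset_univ N)
        (fun i _ _ => h0 i c'')
    calc ∑ i ∈ N, used i = ∑ c'' ∈ W ∩ C', ∑ i ∈ N, g i c'' := by rw [e1, e2]
      _ ≤ ∑ _c'' ∈ W ∩ C', q := Finset.sum_le_sum e3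
      _ = ((W ∩ C').card : ℝ) * q := by rw [Finset.sum_const, nsmul_eq_mul]
  set slack : ℝ := ∑ i ∈ N, (1 - used i) with hslackDef
  have hslack_ge : q ≤ slack := by
    have : slack = (N.card : ℝ) - ∑ i ∈ N, used i := by
      rw [hslackDef, Finset.sum_sub_distrib, Finset.sum_const, nsmul_eq_mul, mul_one]
    rw [this]
    nlinarith [hN, hpay]
  have hslack_pos : 0 < slack := lt_of_lt_of_le hq hslack_ge
  refine ⟨fun i c' => if c' = c ∧ i ∈ N then (1 - used i) * (q / slack) else g i c',
    ?_, ?_, ?_, ?_⟩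
  · intro i c'
    by_cases h : c' = c ∧ i ∈ N
    · simp only [h, if_pos, and_self]
      have : 0 ≤ 1 - used i := by linarith [hused1 i]
      positivity
    · simpa [h] using h0 i c'
  · intro i c' hne
    by_cases h : c' = c ∧ i ∈ N
    · refine ⟨by simp [h.1], ?_⟩
      rw [h.1, hNpre i h.2]
      exact hc
    · have hne' : g i c' ≠ 0 := by
        intro h0'
        apply hne
        simp [h, h0']
      exact ⟨Finset.mem_insert_of_mem (hsupp i c' hne').1, (hsupp i c' hne').2⟩
  · intro i
    by_cases hiN : i ∈ N
    · have key : ∑ c', (if c' = c ∧ i ∈ N then (1 - used i) * (q / slack) else g i c')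
          = (1 - used i) * (q / slack) + ∑ c' ∈ Finset.univ.erase c, g i c' := by
        rw [← Finset.add_sum_erase _ _ (Finset.mem_univ c)]
        congr 1
        · simp [hiN]
        · apply Finset.sum_congr rfl
          intro c' hc'
          have : c' ≠ c := (Finset.mem_erase.mp hc').1
          simp [this]
      rw [key]
      have herase : ∑ c' ∈ Finset.univ.erase c, g i c' = used i := by
        show _ = ∑ c' : C, g i c'
        rw [← Finset.add_sum_erase _ _ (Finset.mem_univ c), hgc0 i, zero_add]
      rw [herase]
      have h1 : (1 - used i) * (q / slack) ≤ (1 - used i) * 1 := by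
        apply mul_le_mul_of_nonneg_left _ (by linarith [hused1 i])
        rw [div_le_one hslack_pos]
        exact hslack_ge
      linarith
    · have : ∀ c', (if c' = c ∧ i ∈ N then (1 - used i) * (q / slack) else g i c') = g i c' := by
        intro c'; simp [hiN]
      rw [Finset.sum_congr rfl (fun c' _ => this c')]
      exact hv i
  · intro c'' hc''
    rcases Finset.mem_insert.mp hc'' with rfl | hc''W
    · have e : ∀ i : V, (if c'' = c'' ∧ i ∈ N then (1 - used i) * (q / slack) else g i c'')
          = if i ∈ N then (1 - used i) * (q / slack) else 0 := by
        intro i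
        by_cases hiN : i ∈ N <;> simp [hiN, hgc0 i]
      rw [Finset.sum_congr rfl (fun i _ => e i), Finset.sum_ite_mem,
        Finset.univ_inter, ← Finset.sum_mul]
      rw [← hslackDef, mul_div_assoc']
      field_simp
    · have hne : c'' ≠ c := fun h => hcW (h ▸ hc''W)
      have e : ∀ i : V, (if c'' = c ∧ i ∈ N then (1 - used i) * (q / slack) else g i c'')
          = g i c'' := by
        intro i; simp [hne]
      rw [Finset.sum_congr rfl (fun i _ => e i)]
      exact hcand c'' hc''W

/-- Completing one stage: from a certified committee we can reach a certified
committee satisfying all level-`j` demands. -/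
lemma stage_complete (hq : 0 < q) (j : ℕ) :
    ∀ (n : ℕ) (W : Finset C), ((Finset.univ : Finset C) \ W).card ≤ n →
      Cert rank q j W →
      ∃ W', W ⊆ W' ∧ Cert rank q j W' ∧ Sat rank q j W' := by
  intro n
  induction n with
  | zero =>
    intro W hcard hcert
    by_cases hsat : Sat rank q j W
    · exact ⟨W, Finset.Subset.rfl, hcert, hsat⟩
    · exfalso
      simp only [Sat, not_forall, not_le] at hsat
      obtain ⟨C', hC'card, ℓ, hℓ, hle, hmin⟩ := hsat
      have hlt : (W ∩ C').card < C'.card := lt_of_lt_of_le hmin (min_le_right _ _)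
      have : ¬ C' ⊆ W := by
        intro hsub
        have heq : W ∩ C' = C' := by
          rw [Finset.inter_comm]
          exact Finset.inter_eq_left.mpr hsub
        rw [heq] at hlt
        omega
      obtain ⟨c, hcC', hcW⟩ := Finset.not_subset.mp this
      have : c ∈ (Finset.univ : Finset C) \ W := Finset.mem_sdiff.mpr ⟨Finset.mem_univ c, hcW⟩
      have := Finset.card_pos.mpr ⟨c, this⟩
      omega
  | succ n ih =>
    intro W hcard hcert
    by_cases hsat : Sat rank q j W
    · exact ⟨W, Finset.Subset.rfl, hcert, hsat⟩
    · simp only [Sat, not_forall, not_le] at hsat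
      obtain ⟨C', hC'card, ℓ, hℓ, hle, hmin⟩ := hsat
      have hlt : (W ∩ C').card < C'.card := lt_of_lt_of_le hmin (min_le_right _ _)
      have hnotsub : ¬ C' ⊆ W := by
        intro hsub
        have heq : W ∩ C' = C' := by
          rw [Finset.inter_comm]
          exact Finset.inter_eq_left.mpr hsub
        rw [heq] at hlt
        omega
      obtain ⟨c, hcC', hcW⟩ := Finset.not_subset.mp hnotsub
      have hℓle : (W ∩ C').card + 1 ≤ ℓ := lt_of_lt_of_le hmin (min_le_left _ _)
      have hN : (((W ∩ C').card : ℝ) + 1) * q ≤ ((eqClass rank j C').card : ℝ) := by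
        refine le_trans ?_ hle
        apply mul_le_mul_of_nonneg_right _ (le_of_lt hq)
        exact_mod_cast hℓle
      have hcert' := cert_insert rank q hq hcert C' hN hcC' hcW
      have hcard' : ((Finset.univ : Finset C) \ insert c W).card ≤ n := by
        rw [Finset.sdiff_insert]
        have hmem : c ∈ (Finset.univ : Finset C) \ W :=
          Finset.mem_sdiff.mpr ⟨Finset.mem_univ c, hcW⟩
        rw [Finset.card_erase_of_mem hmem]
        omega
      obtain ⟨W', hsub', hcert'', hsat'⟩ := ih (insert c W) hcard' hcert'
      exact ⟨W', le_trans (Finset.subset_insert c W) hsub', hcert'', hsat'⟩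

/-- Running the process up to stage `j`. -/
lemma process (hq : 0 < q) (j : ℕ) :
    ∃ W : Finset C, Cert rank q j W ∧ ∀ j' ≤ j, Sat rank q j' W := by
  induction j with
  | zero =>
    refine ⟨∅, ⟨fun _ _ => 0, by simp, by simp, by simp, by simp⟩, ?_⟩
    intro j' hj'
    interval_cases j'
    intro C' hC' ℓ hℓ hle
    rw [Finset.card_eq_zero.mp hC']
    simp
  | succ j ih =>
    obtain ⟨W, hcert, hsat⟩ := ih
    have hcert' := cert_mono_j rank q (Nat.le_succ j) hcert
    obtain ⟨W', hsub, hcert'', hsat'⟩ :=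
      stage_complete rank q hq (j + 1) ((Finset.univ : Finset C) \ W).card W le_rfl hcert'
    refine ⟨W', hcert'', ?_⟩
    intro j' hj'
    rcases eq_or_lt_of_le hj' with rfl | h
    · exact hsat'
    · exact sat_mono rank q hsub (hsat j' (Nat.lt_succ_iff.mp h))

/-- Every member of a solid coalition for a nonempty `C'` has `C'` as their
`|C'|`-prefix. -/
lemma solid_prefix {N' : Finset V} {C' : Finset C} (h : Solid rank N' C')
    {i : V} (hi : i ∈ N') : prefixSet rank i C'.card = C' := by
  have hm : Fintype.card C = m := by
    rw [Fintype.card_congr (rank i), Fintype.card_fin]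
  have hjm : C'.card ≤ m := by
    rw [← hm]
    exact Finset.card_le_univ C'
  have hsub : prefixSet rank i C'.card ⊆ C' := by
    intro c hcp
    by_contra hcC
    simp only [prefixSet, Finset.mem_filter, Finset.mem_univ, true_and] at hcp
    have hall : ∀ c' ∈ C', ((rank i) c' : ℕ) < ((rank i) c : ℕ) :=
      fun c' hc' => h i hi c' hc' c hcC
    have hinj : C'.card ≤ (Finset.univ.filter fun x : Fin m => (x : ℕ) < ((rank i) c : ℕ)).card := by
      apply Finset.card_le_card_of_injOn (rank i)
      · intro c' hc'
        simp only [Finset.mem_coe, Finset.mem_filter, Finset.mem_univ, true_and]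
        exact hall c' hc'
      · exact Set.injOn_of_injective (rank i).injective
    rw [card_fin_filter_lt] at hinj
    have : ((rank i) c : ℕ) < m := ((rank i) c).isLt
    omega
  apply Finset.eq_of_subset_of_card_le hsub
  rw [prefixSet_card]
  omega

end Aux

/-- for any profile, `k ≤ m` and `q ∈ (n/(k+1), n/k]`, there
exists a committee of size `k` satisfying `q`-PSC. -/
theorem psc_committee_exists (rank : V → C ≃ Fin m) (q : ℝ) (k : ℕ)
    (hkm : k ≤ Fintype.card C)
    (hql : (Fintype.card V : ℝ) / ((k : ℝ) + 1) < q)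
    (hqu : q ≤ (Fintype.card V : ℝ) / (k : ℝ)) :
    ∃ W : Finset C, W.card = k ∧ PSC rank q W := by
  have hk1 : (0 : ℝ) < (k : ℝ) + 1 := by positivity
  have hq0 : 0 < q := lt_of_le_of_lt (by positivity) hql
  have hn : (Fintype.card V : ℝ) < ((k : ℝ) + 1) * q := by
    rw [div_lt_iff₀ hk1] at hql
    linarith
  cases isEmpty_or_nonempty V with
  | inl hV =>
    have hcardV : Fintype.card V = 0 := Fintype.card_eq_zero
    obtain ⟨W, _, hWcard⟩ := Finset.exists_subset_card_eq
      (show k ≤ (Finset.univ : Finset C).card by rwa [Finset.card_univ])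
    refine ⟨W, hWcard, ?_⟩
    intro ℓ hℓ N' C' hsolid hle
    exfalso
    have hN' : N' = ∅ := Finset.eq_empty_of_isEmpty N'
    rw [hN'] at hle
    simp only [Finset.card_empty, Nat.cast_zero] at hle
    have : (0 : ℝ) < (ℓ : ℝ) * q := by
      apply mul_pos _ hq0
      exact_mod_cast hℓ
    linarith
  | inr hV =>
    obtain ⟨i0⟩ := hV
    have hm : Fintype.card C = m := by
      rw [Fintype.card_congr (rank i0), Fintype.card_fin]
    obtain ⟨W0, hcert, hsat⟩ := process rank q hq0 m
    have hW0k : W0.card ≤ k := by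
      have h1 := cert_card rank q hq0 hcert
      have h2 : (W0.card : ℝ) * q < ((k : ℝ) + 1) * q := lt_of_le_of_lt h1 hn
      have h3 : (W0.card : ℝ) < (k : ℝ) + 1 := lt_of_mul_lt_mul_right h2 (le_of_lt hq0)
      have : W0.card < k + 1 := by exact_mod_cast h3
      omega
    obtain ⟨W, hW0W, _, hWcard⟩ := Finset.exists_subsuperset_card_eq
      (Finset.subset_univ W0) hW0k (by rwa [Finset.card_univ])
    refine ⟨W, hWcard, ?_⟩
    intro ℓ hℓ N' C' hsolid hle
    rcases C'.eq_empty_or_nonempty with rfl | hC'ne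
    · simp
    rcases N'.eq_empty_or_nonempty with rfl | ⟨i, hi⟩
    · exfalso
      simp only [Finset.card_empty, Nat.cast_zero] at hle
      have : (0 : ℝ) < (ℓ : ℝ) * q := by
        apply mul_pos _ hq0
        exact_mod_cast hℓ
      linarith
    have hsubN : N' ⊆ eqClass rank C'.card C' := by
      intro i' hi'
      simp only [eqClass, Finset.mem_filter, Finset.mem_univ, true_and]
      exact solid_prefix rank hsolid hi'
    have hjm : C'.card ≤ m := by
      rw [← hm]; exact Finset.card_le_univ C'
    have hle' : (ℓ : ℝ) * q ≤ ((eqClass rank C'.card C').card : ℝ) := by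
      refine le_trans hle ?_
      exact_mod_cast Finset.card_le_card hsubN
    have h1 := hsat C'.card hjm C' rfl ℓ hℓ hle'
    refine le_trans h1 ?_
    exact Finset.card_le_card (Finset.inter_subset_inter hW0W Finset.Subset.rfl)
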